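/- Let n ≥ 1 and let m be a subspace of the space of alternating 2-forms on ℝⁿ such that the linear map from alternating 3-forms on ℝⁿ to linear maps ℝⁿ → m, sending T to the map X ↦ proj_m(T(X,·,·)), is surjective. Then 3·dim g ≥ n² − 1, where g denotes the orthogonal complement of m in the space of alternating 2-forms, i.e. dim g = n(n−1)/2 − dim m. Equivalently, 6·dim m ≤ (n−1)(n−2). -/

import Mathlib

open scoped BigOperators RealInnerProductSpace

noncomputable section

/-- `n`-dimensional Euclidean space. -/
abbrev E (n : ℕ) := EuclideanSpace ℝ (Fin n)

/-- Alternating 2-forms on `ℝⁿ`. -/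
abbrev Form2 (n : ℕ) := (E n) [⋀^Fin 2]→ₗ[ℝ] ℝ

/-- Alternating 3-forms on `ℝⁿ`. -/
abbrev Form3 (n : ℕ) := (E n) [⋀^Fin 3]→ₗ[ℝ] ℝ

/-- The standard orthonormal basis vectors of `ℝⁿ`. -/
def stdBasis {n : ℕ} (i : Fin n) : E n := EuclideanSpace.single i 1

/-- The inner product `⟨A,B⟩ = ∑_{i<j} A(e_i,e_j)·B(e_i,e_j)` on alternating 2-forms. -/
def ip {n : ℕ} (A B : Form2 n) : ℝ :=
  ∑ i : Fin n, ∑ j : Fin n, if i < j then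
    A ![stdBasis i, stdBasis j] * B ![stdBasis i, stdBasis j] else 0

/-- The contraction `(s ⌟ T)(X) = ∑_{i<j} s(e_i,e_j)·T(e_i,e_j,X)` of a 3-form by a 2-form. -/
def hook {n : ℕ} (s : Form2 n) (T : Form3 n) (X : E n) : ℝ :=
  ∑ i : Fin n, ∑ j : Fin n, if i < j then
    s ![stdBasis i, stdBasis j] * T ![stdBasis i, stdBasis j, X] else 0

/-- `IsOrthProj W p q` : `q` is the orthogonal projection (w.r.t. `ip`) of `p`
onto the subspace `W` of alternating 2-forms. -/
def IsOrthProj {n : ℕ} (W : Submodule ℝ (Form2 n)) (p q : Form2 n) : Prop :=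
  q ∈ W ∧ ∀ r ∈ W, ip (p - q) r = 0

/-! ### Auxiliary lemmas -/

namespace Stmt9Aux

lemma stdBasis_eq {n : ℕ} (i : Fin n) :
    (EuclideanSpace.basisFun (Fin n) ℝ).toBasis i = stdBasis i := by
  simp [stdBasis, OrthonormalBasis.coe_toBasis, EuclideanSpace.basisFun_apply]

/-- Evaluation of alternating `k`-forms on sorted basis tuples. -/
def evalMap (n k : ℕ) :
    ((E n) [⋀^Fin k]→ₗ[ℝ] ℝ) →ₗ[ℝ] ({s : Finset (Fin n) // s.card = k} → ℝ) where
  toFun T s := T (fun i => stdBasis (s.1.orderEmbOfFin s.2 i))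
  map_add' T U := by ext s; simp
  map_smul' c T := by ext s; simp

lemma evalMap_injective (n k : ℕ) : Function.Injective (evalMap n k) := by
  rw [injective_iff_map_eq_zero]
  intro T hT
  refine Module.Basis.ext_alternating (EuclideanSpace.basisFun (Fin n) ℝ).toBasis (fun v hv => ?_)
  rw [AlternatingMap.zero_apply]
  have hbe : (fun i => (EuclideanSpace.basisFun (Fin n) ℝ).toBasis (v i))
      = fun i => stdBasis (v i) := by funext i; exact stdBasis_eq _
  rw [hbe]
  set σ := Tuple.sort v with hσdef
  have hmono : Monotone (v ∘ σ) := Tuple.monotone_sort v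
  have hsm : StrictMono (v ∘ σ) := hmono.strictMono_of_injective (hv.comp σ.injective)
  set s : Finset (Fin n) := Finset.image v Finset.univ with hsdef
  have hs : s.card = k := by
    rw [hsdef, Finset.card_image_of_injective _ hv, Finset.card_univ, Fintype.card_fin]
  have hw : ∀ i, (v ∘ σ) i ∈ s := fun i => Finset.mem_image_of_mem _ (Finset.mem_univ _)
  have heq : (v ∘ σ) = s.orderEmbOfFin hs := Finset.orderEmbOfFin_unique hs hw hsm
  have h1 : T (fun i => stdBasis ((v ∘ σ) i)) = 0 := by
    rw [heq]
    have := congrFun hT ⟨s, hs⟩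
    simpa [evalMap] using this
  have h2 : T ((fun i => stdBasis (v i)) ∘ σ) = Equiv.Perm.sign σ • T (fun i => stdBasis (v i)) :=
    T.map_perm _ σ
  have h3 : ((fun i => stdBasis (v i)) ∘ σ) = fun i => stdBasis ((v ∘ σ) i) := rfl
  rw [h3, h1] at h2
  rcases Int.units_eq_one_or (Equiv.Perm.sign σ) with h | h <;> rw [h] at h2 <;>
    simpa using h2.symm

lemma formFD (n k : ℕ) : FiniteDimensional ℝ ((E n) [⋀^Fin k]→ₗ[ℝ] ℝ) :=
  FiniteDimensional.of_injective (evalMap n k) (evalMap_injective n k)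

lemma finrank_form_le (n k : ℕ) :
    Module.finrank ℝ ((E n) [⋀^Fin k]→ₗ[ℝ] ℝ) ≤ n.choose k := by
  have h := LinearMap.finrank_le_finrank_of_injective (evalMap_injective n k)
  calc Module.finrank ℝ ((E n) [⋀^Fin k]→ₗ[ℝ] ℝ)
      ≤ Module.finrank ℝ ({s : Finset (Fin n) // s.card = k} → ℝ) := h
    _ = Fintype.card {s : Finset (Fin n) // s.card = k} := Module.finrank_pi ℝ
    _ = n.choose k := by rw [Fintype.card_finset_len, Fintype.card_fin]

lemma ip_add_left {n : ℕ} (p q r : Form2 n) : ip (p + q) r = ip p r + ip q r := by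
  unfold ip
  rw [← Finset.sum_add_distrib]
  refine Finset.sum_congr rfl fun i _ => ?_
  rw [← Finset.sum_add_distrib]
  refine Finset.sum_congr rfl fun j _ => ?_
  split_ifs with h
  · simp [add_mul]
  · simp

lemma ip_smul_left {n : ℕ} (c : ℝ) (p r : Form2 n) : ip (c • p) r = c * ip p r := by
  unfold ip
  rw [Finset.mul_sum]
  refine Finset.sum_congr rfl fun i _ => ?_
  rw [Finset.mul_sum]
  refine Finset.sum_congr rfl fun j _ => ?_
  split_ifs with h
  · simp [mul_assoc]
  · simp

/-- The `ip`-orthogonal annihilator of `m`. -/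
def mperp {n : ℕ} (m : Submodule ℝ (Form2 n)) : Submodule ℝ (Form2 n) where
  carrier := {p | ∀ r ∈ m, ip p r = 0}
  zero_mem' := by intro r hr; simp [ip]
  add_mem' := by intro p q hp hq r hr; rw [ip_add_left, hp r hr, hq r hr, add_zero]
  smul_mem' := by intro c p hp r hr; rw [ip_smul_left, hp r hr, mul_zero]

lemma ip_self_eq_zero {n : ℕ} {p : Form2 n} (h : ip p p = 0) : p = 0 := by
  have hcoef : ∀ i j : Fin n, i < j → p ![stdBasis i, stdBasis j] = 0 := by
    intro i j hij
    have hterm : ∀ x ∈ (Finset.univ ×ˢ Finset.univ : Finset (Fin n × Fin n)),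
        0 ≤ (if x.1 < x.2 then
          p ![stdBasis x.1, stdBasis x.2] * p ![stdBasis x.1, stdBasis x.2] else 0) := by
      intro x _
      split_ifs
      · exact mul_self_nonneg _
      · exact le_refl 0
    have hsum : ∑ x ∈ (Finset.univ ×ˢ Finset.univ : Finset (Fin n × Fin n)),
        (if x.1 < x.2 then
          p ![stdBasis x.1, stdBasis x.2] * p ![stdBasis x.1, stdBasis x.2] else 0) = 0 := by
      rw [Finset.sum_product]; exact h
    have := (Finset.sum_eq_zero_iff_of_nonneg hterm).1 hsum (i, j) (by simp)
    simpa [hij, mul_self_eq_zero] using this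
  refine Module.Basis.ext_alternating (EuclideanSpace.basisFun (Fin n) ℝ).toBasis (fun v hv => ?_)
  rw [AlternatingMap.zero_apply]
  have hne : v 0 ≠ v 1 := fun hcon => (by decide : (0 : Fin 2) ≠ 1) (hv hcon)
  have hfun : (fun i => (EuclideanSpace.basisFun (Fin n) ℝ).toBasis (v i))
      = ![stdBasis (v 0), stdBasis (v 1)] := by
    funext i
    fin_cases i <;> simp [stdBasis_eq]
  rw [hfun]
  rcases lt_or_gt_of_ne hne with hlt | hgt
  · exact hcoef _ _ hlt
  · have hco := hcoef _ _ hgt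
    have hcomp : (![stdBasis (v 0), stdBasis (v 1)] : Fin 2 → E n)
        = ![stdBasis (v 1), stdBasis (v 0)] ∘ Equiv.swap (0 : Fin 2) 1 := by
      funext i
      fin_cases i <;> simp
    rw [hcomp, AlternatingMap.map_swap _ _ (by decide : (0 : Fin 2) ≠ 1), hco, neg_zero]

end Stmt9Aux

open Stmt9Aux in
/-- the dimension bound of Example 5.4 of the paper.
If `m` is a subspace of the alternating 2-forms on `ℝⁿ` such that every linear map
`Γ : ℝⁿ → m` arises as `X ↦ proj_m(T(X,·,·))` for some alternating 3-form `T`,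
then `6·dim m ≤ (n−1)(n−2)`; equivalently, `3·dim g ≥ n² − 1` for the orthogonal
complement `g` of `m`. -/
theorem stmt_9 {n : ℕ} (hn : 1 ≤ n) (m : Submodule ℝ (Form2 n))
    (hsurj : ∀ Γ : E n →ₗ[ℝ] Form2 n, (∀ X, Γ X ∈ m) →
      ∃ T : Form3 n, ∀ X, IsOrthProj m (T.curryLeft X) (Γ X)) :
    6 * Module.finrank ℝ m ≤ (n - 1) * (n - 2) := by
  classical
  haveI : FiniteDimensional ℝ (Form2 n) := formFD n 2
  haveI : FiniteDimensional ℝ (Form3 n) := formFD n 3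
  -- the quotient by `m^⊥`
  have hdisj : ∀ p : Form2 n, p ∈ m → p ∈ mperp m → p = 0 :=
    fun p hm hp => ip_self_eq_zero (hp p hm)
  let j : m →ₗ[ℝ] Form2 n ⧸ mperp m := ((mperp m).mkQ).comp m.subtype
  have hj : Function.Injective j := by
    intro a b hab
    have hab' : Submodule.Quotient.mk (p := mperp m) (a : Form2 n)
        = Submodule.Quotient.mk (b : Form2 n) := hab
    have hmem : (a : Form2 n) - b ∈ mperp m := (Submodule.Quotient.eq _).1 hab'
    have := hdisj _ (sub_mem a.2 b.2) hmem
    exact Subtype.ext (sub_eq_zero.1 this)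
  let C : (E n →ₗ[ℝ] m) →ₗ[ℝ] (E n →ₗ[ℝ] Form2 n ⧸ mperp m) :=
    LinearMap.llcomp ℝ (E n) m (Form2 n ⧸ mperp m) j
  have hC : Function.Injective C := by
    intro Γ Γ' h
    exact LinearMap.ext fun X => hj (DFunLike.congr_fun h X)
  let Φ : Form3 n →ₗ[ℝ] (E n →ₗ[ℝ] Form2 n ⧸ mperp m) :=
    (LinearMap.llcomp ℝ (E n) (Form2 n) (Form2 n ⧸ mperp m) ((mperp m).mkQ)).comp
      AlternatingMap.curryLeftLinearMap
  have hrange : LinearMap.range C ≤ LinearMap.range Φ := by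
    rintro y ⟨Γ, rfl⟩
    obtain ⟨T, hT⟩ := hsurj (m.subtype.comp Γ) (fun X => (Γ X).2)
    refine ⟨T, ?_⟩
    ext X
    have hmem : T.curryLeft X - (Γ X : Form2 n) ∈ mperp m := fun r hr => (hT X).2 r hr
    show (mperp m).mkQ (T.curryLeft X) = (mperp m).mkQ (Γ X : Form2 n)
    exact (Submodule.Quotient.eq _).2 hmem
  -- dimension count
  have hmain : n * Module.finrank ℝ m ≤ n.choose 3 := by
    calc n * Module.finrank ℝ m
        = Module.finrank ℝ (E n →ₗ[ℝ] m) := by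
          haveI : Module.Free ℝ m := Module.Free.of_divisionRing ℝ m
          rw [Module.finrank_linearMap (R := ℝ) (S := ℝ) (M := E n) (N := m), finrank_euclideanSpace_fin]
      _ = Module.finrank ℝ (LinearMap.range C) := (LinearMap.finrank_range_of_inj hC).symm
      _ ≤ Module.finrank ℝ (LinearMap.range Φ) := Submodule.finrank_mono hrange
      _ ≤ Module.finrank ℝ (Form3 n) := LinearMap.finrank_range_le Φ
      _ ≤ n.choose 3 := finrank_form_le n 3
  have h6 : 6 * n.choose 3 = (n - 2) * ((n - 1) * (n * 1)) := by
    have hd := Nat.descFactorial_eq_factorial_mul_choose n 3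
    simp only [Nat.descFactorial] at hd
    rw [show (6 : ℕ) = Nat.factorial 3 from rfl, ← hd]
    simp
  refine Nat.le_of_mul_le_mul_left ?_ (show 0 < n from hn)
  calc n * (6 * Module.finrank ℝ m) = 6 * (n * Module.finrank ℝ m) := by ring
    _ ≤ 6 * n.choose 3 := Nat.mul_le_mul_left 6 hmain
    _ = (n - 2) * ((n - 1) * (n * 1)) := h6
    _ = n * ((n - 1) * (n - 2)) := by ring

end
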